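/- The centralizer of B_2 in B_3 consists exactly of the elements (σ₂σ₁²σ₂)^p σ₁^q for p, q ∈ ℤ, and this centralizer is isomorphic to ℤ × ℤ. -/

import Mathlib

/-- The braid relations on generators indexed by `Fin m` (generator `i` is `σ_{i+1}`). -/
def braidRels (m : ℕ) : Set (FreeGroup (Fin m)) :=
  {r | (∃ i j : Fin m, (i : ℕ) + 1 < (j : ℕ) ∧
        r = FreeGroup.of i * FreeGroup.of j * (FreeGroup.of i)⁻¹ * (FreeGroup.of j)⁻¹) ∨
       (∃ i j : Fin m, (i : ℕ) + 1 = (j : ℕ) ∧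
        r = FreeGroup.of i * FreeGroup.of j * FreeGroup.of i *
            (FreeGroup.of j * FreeGroup.of i * FreeGroup.of j)⁻¹)}

/-- The Artin braid group `B_n`, presented with generators `σ₁, …, σ_{n-1}`. -/
abbrev BraidGroup (n : ℕ) := PresentedGroup (braidRels (n - 1))

/-- The Artin generator; `braidGen i` represents `σ_{i+1}`. -/
def braidGen {n : ℕ} (i : Fin (n - 1)) : BraidGroup n := PresentedGroup.of i

/-- `σ_k` (1-indexed), or `1` if out of range. -/
def sigma' (n k : ℕ) : BraidGroup n :=
  if h : k - 1 < n - 1 then braidGen ⟨k - 1, h⟩ else 1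

/-- A braid is `i`-positive (`i : Fin (n-1)` standing for `σ_{i+1}`) if it is represented by
a word using only generators of index ≤ i, in which generator `i` occurs, and only with
positive exponent. -/
def IsIPositive {n : ℕ} (β : BraidGroup n) (i : Fin (n - 1)) : Prop :=
  ∃ w : FreeGroup (Fin (n - 1)), PresentedGroup.mk (braidRels (n - 1)) w = β ∧
    (∀ l ∈ w.toWord, l.1 ≤ i ∧ (l.1 = i → l.2 = true)) ∧ (∃ l ∈ w.toWord, l.1 = i)

/-- A braid is `i`-negative if its inverse is `i`-positive. -/
def IsINegative {n : ℕ} (β : BraidGroup n) (i : Fin (n - 1)) : Prop :=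
  IsIPositive β⁻¹ i

/-- Dehornoy-positive braids: `i`-positive for some `i`. -/
def DPos {n : ℕ} (β : BraidGroup n) : Prop := ∃ i, IsIPositive β i

/-- The Dehornoy ordering on `B_n`. -/
def DLt {n : ℕ} (a b : BraidGroup n) : Prop := DPos (a⁻¹ * b)

/-- The copy of `B_r` inside `B_n` generated by `σ₁, …, σ_{r-1}`. -/
def braidSub (n r : ℕ) : Subgroup (BraidGroup n) :=
  Subgroup.closure {β | ∃ i : Fin (n - 1), (i : ℕ) < r - 1 ∧ β = braidGen i}

/-- `σ_a σ_{a-1} ⋯ σ_b` (1-indexed). -/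
def descSeg (n a b : ℕ) : BraidGroup n :=
  (((List.range (a - b + 1)).map fun j => sigma' n (a - j)).prod)

/-- The Garside half twist `Δ_k = (σ_{k-1}⋯σ₁)(σ_{k-1}⋯σ₂)⋯(σ_{k-1}σ_{k-2})(σ_{k-1})`
viewed in `B_n`. -/
def Delta (n k : ℕ) : BraidGroup n :=
  (((List.range (k - 1)).map fun m => descSeg n (k - 1) (m + 1)).prod)

namespace Braid11

abbrev B := BraidGroup 3

def a : B := braidGen (⟨0, by norm_num⟩ : Fin (3-1))
def b : B := braidGen (⟨1, by norm_num⟩ : Fin (3-1))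

lemma of0 : (PresentedGroup.of (0 : Fin 2) : B) = a := rfl
lemma of1 : (PresentedGroup.of (1 : Fin 2) : B) = b := rfl

lemma braid_rel : a * b * a = b * a * b := by
  have h : (FreeGroup.of (0:Fin 2) * FreeGroup.of (1:Fin 2) * FreeGroup.of (0:Fin 2) *
      (FreeGroup.of (1:Fin 2) * FreeGroup.of (0:Fin 2) * FreeGroup.of (1:Fin 2))⁻¹) ∈
      braidRels 2 := by
    right; exact ⟨0, 1, rfl, rfl⟩
  have h2 : PresentedGroup.mk (braidRels 2)
      (FreeGroup.of (0:Fin 2) * FreeGroup.of (1:Fin 2) * FreeGroup.of (0:Fin 2) *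
      (FreeGroup.of (1:Fin 2) * FreeGroup.of (0:Fin 2) * FreeGroup.of (1:Fin 2))⁻¹) = 1 := by
    have := Subgroup.subset_normalClosure h
    exact (QuotientGroup.eq_one_iff _).2 this
  rw [map_mul, map_mul, map_inv, map_mul, map_mul] at h2
  have h3 : (a * b * a) * (b * a * b)⁻¹ = 1 := h2
  group at h3 ⊢
  exact mul_inv_eq_one.mp h3

def x : B := a * b * a
def y : B := a * b
def z : B := x * x

lemma xx_eq : x * x = y * y * y := by
  show (a*b*a) * (a*b*a) = (a*b)*(a*b)*(a*b)
  nth_rewrite 2 [braid_rel]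
  group

lemma a_eq : a = y⁻¹ * x := by show a = (a*b)⁻¹ * (a*b*a); group
lemma b_eq : b = x⁻¹ * (y * y) := by show b = (a*b*a)⁻¹ * ((a*b)*(a*b)); group

lemma comm_zx : Commute z x := by unfold z; exact (Commute.refl x).mul_left (Commute.refl x)
lemma comm_zy : Commute z y := by
  unfold z; rw [xx_eq]
  exact ((Commute.refl y).mul_left ((Commute.refl y).mul_left (Commute.refl y)))

lemma comm_za : Commute z a := by rw [a_eq]; exact comm_zy.inv_right.mul_right comm_zx
lemma comm_zb : Commute z b := by
  rw [b_eq]; exact comm_zx.inv_right.mul_right (comm_zy.mul_right comm_zy)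

lemma z_central : ∀ w : B, Commute z w := by
  intro w
  have : w ∈ Subgroup.centralizer ({z} : Set B) := by
    apply PresentedGroup.generated_by
    intro j
    fin_cases j
    · show a ∈ Subgroup.centralizer ({z} : Set B)
      rw [Subgroup.mem_centralizer_iff]
      intro h hh; rw [Set.mem_singleton_iff] at hh; subst hh; exact comm_za.eq
    · show b ∈ Subgroup.centralizer ({z} : Set B)
      rw [Subgroup.mem_centralizer_iff]
      intro h hh; rw [Set.mem_singleton_iff] at hh; subst hh; exact comm_zb.eq
  rw [Subgroup.mem_centralizer_iff] at this
  exact (this z rfl)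




inductive L : Type | lx | ly1 | ly2
deriving DecidableEq

open L

/-- class of a letter: `true` for the x-syllable, `false` for y-syllables. -/
def cls : L → Bool | lx => true | ly1 => false | ly2 => false

/-- alternating words -/
abbrev Alt (l : List L) : Prop := List.Chain' (fun p q => cls p ≠ cls q) l

@[simp] lemma alt_nil : Alt [] := List.isChain_nil
@[simp] lemma alt_singleton (c : L) : Alt [c] := List.isChain_singleton c
lemma alt_cons_cons {c d : L} {l : List L} :
    Alt (c :: d :: l) ↔ (cls c ≠ cls d) ∧ Alt (d :: l) := List.isChain_cons_cons
lemma alt_tail {c : L} {l : List L} (h : Alt (c :: l)) : Alt l := h.tail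

abbrev X := {p : ℤ × List L // Alt p.2}

def fx : ℤ × List L → ℤ × List L
  | (k, lx :: t) => (k+1, t)
  | (k, l) => (k, lx :: l)

def gx : ℤ × List L → ℤ × List L
  | (k, lx :: t) => (k, t)
  | (k, l) => (k-1, lx :: l)

def fy : ℤ × List L → ℤ × List L
  | (k, ly1 :: t) => (k, ly2 :: t)
  | (k, ly2 :: t) => (k+1, t)
  | (k, l) => (k, ly1 :: l)

def gy : ℤ × List L → ℤ × List L
  | (k, ly2 :: t) => (k, ly1 :: t)
  | (k, ly1 :: t) => (k, t)
  | (k, l) => (k-1, ly2 :: l)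

section cases
variable {k : ℤ} {t : List L}

@[simp] lemma fx_nil : fx (k, []) = (k, [lx]) := rfl
@[simp] lemma fx_x : fx (k, lx :: t) = (k+1, t) := rfl
@[simp] lemma fx_y1 : fx (k, ly1 :: t) = (k, lx :: ly1 :: t) := rfl
@[simp] lemma fx_y2 : fx (k, ly2 :: t) = (k, lx :: ly2 :: t) := rfl
@[simp] lemma gx_nil : gx (k, []) = (k-1, [lx]) := rfl
@[simp] lemma gx_x : gx (k, lx :: t) = (k, t) := rfl
@[simp] lemma gx_y1 : gx (k, ly1 :: t) = (k-1, lx :: ly1 :: t) := rfl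
@[simp] lemma gx_y2 : gx (k, ly2 :: t) = (k-1, lx :: ly2 :: t) := rfl
@[simp] lemma fy_nil : fy (k, []) = (k, [ly1]) := rfl
@[simp] lemma fy_x : fy (k, lx :: t) = (k, ly1 :: lx :: t) := rfl
@[simp] lemma fy_y1 : fy (k, ly1 :: t) = (k, ly2 :: t) := rfl
@[simp] lemma fy_y2 : fy (k, ly2 :: t) = (k+1, t) := rfl
@[simp] lemma gy_nil : gy (k, []) = (k-1, [ly2]) := rfl
@[simp] lemma gy_x : gy (k, lx :: t) = (k-1, ly2 :: lx :: t) := rfl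
@[simp] lemma gy_y1 : gy (k, ly1 :: t) = (k, t) := rfl
@[simp] lemma gy_y2 : gy (k, ly2 :: t) = (k, ly1 :: t) := rfl

end cases

lemma alt_head_ne {c d : L} {t : List L} (h : Alt (c :: d :: t)) : cls c ≠ cls d :=
  (alt_cons_cons.1 h).1

lemma alt_fx {p : ℤ × List L} (h : Alt p.2) : Alt (fx p).2 := by
  obtain ⟨k, l⟩ := p
  replace h : Alt l := h
  match l with
  | [] => simpa using h
  | lx :: t => simpa using alt_tail h
  | ly1 :: t => simp only [fx_y1]; exact List.isChain_cons_cons.2 ⟨by simp [cls], h⟩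
  | ly2 :: t => simp only [fx_y2]; exact List.isChain_cons_cons.2 ⟨by simp [cls], h⟩

lemma alt_gx {p : ℤ × List L} (h : Alt p.2) : Alt (gx p).2 := by
  obtain ⟨k, l⟩ := p
  replace h : Alt l := h
  match l with
  | [] => simpa using h
  | lx :: t => simpa using alt_tail h
  | ly1 :: t => simp only [gx_y1]; exact List.isChain_cons_cons.2 ⟨by simp [cls], h⟩
  | ly2 :: t => simp only [gx_y2]; exact List.isChain_cons_cons.2 ⟨by simp [cls], h⟩

lemma alt_fy {p : ℤ × List L} (h : Alt p.2) : Alt (fy p).2 := by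
  obtain ⟨k, l⟩ := p
  replace h : Alt l := h
  match l with
  | [] => simpa using h
  | lx :: t => simp only [fy_x]; exact List.isChain_cons_cons.2 ⟨by simp [cls], h⟩
  | ly1 :: t =>
    simp only [fy_y1]
    match t with
    | [] => simp
    | c :: s => exact List.isChain_cons_cons.2 ⟨by simpa [cls] using alt_head_ne h, alt_tail h⟩
  | ly2 :: t => simpa using alt_tail h

lemma alt_gy {p : ℤ × List L} (h : Alt p.2) : Alt (gy p).2 := by
  obtain ⟨k, l⟩ := p
  replace h : Alt l := h
  match l with
  | [] => simpa using h
  | lx :: t => simp only [gy_x]; exact List.isChain_cons_cons.2 ⟨by simp [cls], h⟩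
  | ly2 :: t =>
    simp only [gy_y2]
    match t with
    | [] => simp
    | c :: s => exact List.isChain_cons_cons.2 ⟨by simpa [cls] using alt_head_ne h, alt_tail h⟩
  | ly1 :: t => simpa using alt_tail h

lemma gx_fx {p : ℤ × List L} (h : Alt p.2) : gx (fx p) = p := by
  obtain ⟨k, l⟩ := p
  replace h : Alt l := h
  match l with
  | [] => rfl
  | lx :: t =>
    simp only [fx_x]
    match t with
    | [] => simp
    | lx :: s => exact absurd (alt_head_ne h) (by simp)
    | ly1 :: s => simp
    | ly2 :: s => simp
  | ly1 :: t => rfl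
  | ly2 :: t => rfl

lemma fx_gx {p : ℤ × List L} (h : Alt p.2) : fx (gx p) = p := by
  obtain ⟨k, l⟩ := p
  replace h : Alt l := h
  match l with
  | [] => simp
  | lx :: t =>
    simp only [gx_x]
    match t with
    | [] => simp
    | lx :: s => exact absurd (alt_head_ne h) (by simp)
    | ly1 :: s => simp
    | ly2 :: s => simp
  | ly1 :: t => simp
  | ly2 :: t => simp

lemma gy_fy {p : ℤ × List L} (h : Alt p.2) : gy (fy p) = p := by
  obtain ⟨k, l⟩ := p
  replace h : Alt l := h
  match l with
  | [] => rfl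
  | lx :: t => rfl
  | ly1 :: t => rfl
  | ly2 :: t =>
    simp only [fy_y2]
    match t with
    | [] => simp
    | lx :: s => simp
    | ly1 :: s => exact absurd (alt_head_ne h) (by simp [cls])
    | ly2 :: s => exact absurd (alt_head_ne h) (by simp [cls])

lemma fy_gy {p : ℤ × List L} (h : Alt p.2) : fy (gy p) = p := by
  obtain ⟨k, l⟩ := p
  replace h : Alt l := h
  match l with
  | [] => simp
  | lx :: t => simp
  | ly1 :: t =>
    simp only [gy_y1]
    match t with
    | [] => simp
    | lx :: s => simp
    | ly1 :: s => exact absurd (alt_head_ne h) (by simp [cls])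
    | ly2 :: s => exact absurd (alt_head_ne h) (by simp [cls])
  | ly2 :: t =>
    simp only [gy_y2, fy_y1]

def Rx : Equiv.Perm X where
  toFun p := ⟨fx p.1, alt_fx p.2⟩
  invFun p := ⟨gx p.1, alt_gx p.2⟩
  left_inv p := Subtype.ext (gx_fx p.2)
  right_inv p := Subtype.ext (fx_gx p.2)

def Ry : Equiv.Perm X where
  toFun p := ⟨fy p.1, alt_fy p.2⟩
  invFun p := ⟨gy p.1, alt_gy p.2⟩
  left_inv p := Subtype.ext (gy_fy p.2)
  right_inv p := Subtype.ext (fy_gy p.2)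

@[simp] lemma Rx_apply (p : X) : (Rx p : X).1 = fx p.1 := rfl
@[simp] lemma Ry_apply (p : X) : (Ry p : X).1 = fy p.1 := rfl
@[simp] lemma Rx_inv_apply (p : X) : ((Rx⁻¹ : Equiv.Perm X) p).1 = gx p.1 := rfl
@[simp] lemma Ry_inv_apply (p : X) : ((Ry⁻¹ : Equiv.Perm X) p).1 = gy p.1 := rfl

lemma fx_fx {p : ℤ × List L} (h : Alt p.2) : fx (fx p) = (p.1 + 1, p.2) := by
  obtain ⟨k, l⟩ := p
  replace h : Alt l := h
  match l with
  | [] => simp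
  | lx :: t =>
    simp only [fx_x]
    match t with
    | [] => simp
    | lx :: s => exact absurd (alt_head_ne h) (by simp)
    | ly1 :: s => simp [add_comm]
    | ly2 :: s => simp [add_comm]
  | ly1 :: t => simp
  | ly2 :: t => simp

lemma fy3 {p : ℤ × List L} (h : Alt p.2) : fy (fy (fy p)) = (p.1 + 1, p.2) := by
  obtain ⟨k, l⟩ := p
  replace h : Alt l := h
  match l with
  | [] => simp
  | lx :: t => simp
  | ly1 :: t =>
    simp only [fy_y1, fy_y2]
    match t with
    | [] => simp
    | lx :: s => simp
    | ly1 :: s => exact absurd (alt_head_ne h) (by simp [cls])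
    | ly2 :: s => exact absurd (alt_head_ne h) (by simp [cls])
  | ly2 :: t =>
    simp only [fy_y2]
    match t with
    | [] => simp
    | lx :: s => simp
    | ly1 :: s => exact absurd (alt_head_ne h) (by simp [cls])
    | ly2 :: s => exact absurd (alt_head_ne h) (by simp [cls])

lemma key_rel : Rx * Rx = Ry * (Ry * Ry) := by
  apply Equiv.ext
  intro p
  refine Subtype.ext ?_
  show fx (fx p.1) = fy (fy (fy p.1))
  rw [fx_fx p.2, fy3 p.2]


/-! ### Stage 3: the action hom and θ -/

open L

def fgen : Fin 2 → Equiv.Perm X := ![Ry⁻¹ * Rx, Rx⁻¹ * (Ry * Ry)]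

lemma rels_hold : ∀ r ∈ braidRels 2, (FreeGroup.lift fgen) r = 1 := by
  rintro r (⟨i, j, hij, rfl⟩ | ⟨i, j, hij, rfl⟩)
  · exfalso; omega
  · have hi : i = 0 := by omega
    have hj : j = 1 := by omega
    subst hi; subst hj
    simp only [map_mul, map_inv, FreeGroup.lift_apply_of]
    have h0 : fgen 0 = Ry⁻¹ * Rx := rfl
    have h1 : fgen 1 = Rx⁻¹ * (Ry * Ry) := rfl
    rw [h0, h1, mul_inv_eq_one]
    trans Rx
    · group
    · trans (Rx⁻¹ * (Ry * (Ry * Ry)))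
      · rw [← key_rel]; group
      · group

def Phi : B →* Equiv.Perm X := PresentedGroup.toGroup rels_hold

lemma Phi_a : Phi a = Ry⁻¹ * Rx := by
  rw [← of0]; exact PresentedGroup.toGroup.of rels_hold

lemma Phi_b : Phi b = Rx⁻¹ * (Ry * Ry) := by
  rw [← of1]; exact PresentedGroup.toGroup.of rels_hold

lemma Phi_x : Phi x = Rx := by
  show Phi (a * b * a) = Rx
  rw [map_mul, map_mul, Phi_a, Phi_b]; group

lemma Phi_y : Phi y = Ry := by
  show Phi (a * b) = Ry
  rw [map_mul, Phi_a, Phi_b]; group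

lemma Phi_z : Phi z = Rx * Rx := by
  show Phi (x * x) = Rx * Rx
  rw [map_mul, Phi_x]

/-- letter to group element -/
def gl : L → B | lx => x | ly1 => y | ly2 => y * y

@[simp] lemma gl_x : gl lx = x := rfl
@[simp] lemma gl_y1 : gl ly1 = y := rfl
@[simp] lemma gl_y2 : gl ly2 = y * y := rfl

/-- normal form to group element -/
def θ (p : ℤ × List L) : B := z ^ p.1 * (p.2.map gl).prod

@[simp] lemma theta_pair (k : ℤ) (l : List L) : θ (k, l) = z ^ k * (l.map gl).prod := rfl

lemma zc (w : B) : z * w = w * z := (z_central w).eq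
lemma zpowc (n : ℤ) (w : B) : z ^ n * w = w * z ^ n := ((z_central w).zpow_left n).eq

lemma mv_x (k : ℤ) (w : B) : x * (z ^ k * w) = z ^ k * (x * w) := by
  rw [← mul_assoc, ← zpowc, mul_assoc]
lemma mv_y (k : ℤ) (w : B) : y * (z ^ k * w) = z ^ k * (y * w) := by
  rw [← mul_assoc, ← zpowc, mul_assoc]
lemma red_x (w : B) : x * (x * w) = z * w := by rw [← mul_assoc]; rfl
lemma red_y (w : B) : y * (y * (y * w)) = z * w := by
  rw [← mul_assoc, ← mul_assoc, ← xx_eq]; rfl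

lemma zpow_succ' (k : ℤ) (w : B) : z ^ (k + 1) * w = z ^ k * (z * w) := by
  rw [zpow_add_one, mul_assoc]

lemma mv_x1 (k : ℤ) : x * z ^ k = z ^ k * x := (zpowc k x).symm
lemma mv_y1 (k : ℤ) : y * z ^ k = z ^ k * y := (zpowc k y).symm

lemma theta_fx (p : ℤ × List L) : θ (fx p) = x * θ p := by
  obtain ⟨k, l⟩ := p
  match l with
  | [] => simp [mv_x1]
  | lx :: t => simp [zpow_succ', mv_x, mv_x1, red_x, mul_assoc]
  | ly1 :: t => simp [mv_x, mv_x1, mul_assoc]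
  | ly2 :: t => simp [mv_x, mv_x1, mul_assoc]

lemma theta_fy (p : ℤ × List L) : θ (fy p) = y * θ p := by
  obtain ⟨k, l⟩ := p
  match l with
  | [] => simp [mv_y1]
  | lx :: t => simp [mv_y, mv_y1, mul_assoc]
  | ly1 :: t => simp [mv_y, mv_y1, mul_assoc]
  | ly2 :: t => simp [zpow_succ', mv_y, mv_y1, red_y, mul_assoc]

lemma theta_Rx (p : X) : θ ((Rx p).1) = x * θ p.1 := theta_fx p.1
lemma theta_Ry (p : X) : θ ((Ry p).1) = y * θ p.1 := theta_fy p.1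

lemma theta_Rx_inv (p : X) : θ ((Rx⁻¹ p).1) = x⁻¹ * θ p.1 := by
  have := theta_Rx (Rx⁻¹ p)
  rw [show ∀ (e : Equiv.Perm X) q, e (e⁻¹ q) = q from fun e q => e.apply_symm_apply q] at this
  rw [this, inv_mul_cancel_left]

lemma theta_Ry_inv (p : X) : θ ((Ry⁻¹ p).1) = y⁻¹ * θ p.1 := by
  have := theta_Ry (Ry⁻¹ p)
  rw [show ∀ (e : Equiv.Perm X) q, e (e⁻¹ q) = q from fun e q => e.apply_symm_apply q] at this
  rw [this, inv_mul_cancel_left]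

/-- master equivariance -/
lemma theta_equivariant : ∀ (w : B) (p : X), θ ((Phi w p).1) = w * θ p.1 := by
  have inv_step : ∀ w : B, (∀ p, θ ((Phi w p).1) = w * θ p.1) →
      (∀ p, θ ((Phi w⁻¹ p).1) = w⁻¹ * θ p.1) := by
    intro w hw p
    have h1 : Phi w⁻¹ = (Phi w)⁻¹ := map_inv Phi w
    rw [h1]
    have h2 := hw ((Phi w)⁻¹ p)
    rw [show ∀ (e : Equiv.Perm X) q, e (e⁻¹ q) = q from fun e q => e.apply_symm_apply q] at h2
    rw [h2, inv_mul_cancel_left]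
  have key : ∀ (v : FreeGroup (Fin 2)),
      ∀ p : X, θ ((Phi (PresentedGroup.mk _ v) p).1) = (PresentedGroup.mk (braidRels 2) v) * θ p.1 := by
    intro v
    induction v using FreeGroup.induction_on with
    | C1 => intro p; simp
    | of i =>
      intro p
      fin_cases i
      · show θ ((Phi a p).1) = a * θ p.1
        rw [Phi_a]
        show θ ((Ry⁻¹ (Rx p)).1) = a * θ p.1
        rw [theta_Ry_inv, theta_Rx, a_eq, mul_assoc]
      · show θ ((Phi b p).1) = b * θ p.1
        rw [Phi_b]
        show θ ((Rx⁻¹ (Ry (Ry p))).1) = b * θ p.1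
        rw [theta_Rx_inv, theta_Ry, theta_Ry, b_eq]
        group
    | inv_of i h =>
      intro p
      rw [map_inv]
      exact inv_step _ h p
    | mul u v hu hv =>
      intro p
      rw [map_mul, map_mul]
      show θ ((Phi (PresentedGroup.mk _ u) (Phi (PresentedGroup.mk _ v) p)).1) = _
      rw [hu, hv, mul_assoc]
  intro w p
  obtain ⟨v, rfl⟩ := PresentedGroup.mk_surjective (braidRels 2) w
  exact key v p

def p₀ : X := ⟨(0, []), by simp [Alt]⟩

lemma theta_p0 : θ p₀.1 = 1 := by simp [θ, p₀]

/-- every element is θ of its normal form -/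
lemma theta_nf (w : B) : θ ((Phi w p₀).1) = w := by
  rw [theta_equivariant, theta_p0, mul_one]

/-! ### Stage 4: normal form uniqueness -/

def S : Equiv.Perm X := Rx * Rx

lemma S_val (p : X) : (S p).1 = (p.1.1 + 1, p.1.2) := by
  show fx (fx p.1) = _
  rw [fx_fx p.2]

lemma S_inv_val (p : X) : ((S⁻¹ : Equiv.Perm X) p).1 = (p.1.1 - 1, p.1.2) := by
  have h := S_val ((S⁻¹ : Equiv.Perm X) p)
  rw [show ∀ (e : Equiv.Perm X) q, e (e⁻¹ q) = q from fun e q => e.apply_symm_apply q] at h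
  have h1 : p.1.1 = ((S⁻¹ : Equiv.Perm X) p).1.1 + 1 := by rw [h]
  have h2 : p.1.2 = ((S⁻¹ : Equiv.Perm X) p).1.2 := by rw [h]
  refine Prod.ext ?_ ?_
  · show ((S⁻¹ : Equiv.Perm X) p).1.1 = p.1.1 - 1
    omega
  · exact h2.symm

lemma S_zpow_val (k : ℤ) : ∀ p : X, ((S ^ k) p).1 = (p.1.1 + k, p.1.2) := by
  induction k using Int.induction_on with
  | zero => intro p; simp
  | succ n ih =>
    intro p
    rw [zpow_add_one]
    show ((S ^ (n:ℤ)) (S p)).1 = _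
    rw [ih (S p), S_val]
    refine Prod.ext ?_ ?_ <;> simp <;> ring
  | pred n ih =>
    intro p
    rw [zpow_sub_one]
    show ((S ^ (-(n:ℤ))) ((S⁻¹ : Equiv.Perm X) p)).1 = _
    rw [ih _, S_inv_val]
    refine Prod.ext ?_ ?_ <;> simp <;> ring

lemma Phi_zpow (k : ℤ) : Phi (z ^ k) = S ^ k := by rw [map_zpow, Phi_z]; rfl

lemma prodL_act (l : List L) (h : Alt l) : ((Phi ((l.map gl).prod)) p₀).1 = (0, l) := by
  induction l with
  | nil => simp [p₀]
  | cons c t ih =>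
    have ht : Alt t := alt_tail h
    rw [List.map_cons, List.prod_cons, map_mul]
    show ((Phi (gl c)) ((Phi ((t.map gl).prod)) p₀)).1 = (0, c :: t)
    set q := (Phi ((t.map gl).prod)) p₀ with hq
    have hqv : q.1 = (0, t) := ih ht
    match c with
    | lx =>
      rw [gl_x, Phi_x]
      show fx q.1 = (0, lx :: t)
      rw [hqv]
      match t with
      | [] => rfl
      | lx :: s => exact absurd (alt_head_ne h) (by simp)
      | ly1 :: s => rfl
      | ly2 :: s => rfl
    | ly1 =>
      rw [gl_y1, Phi_y]
      show fy q.1 = (0, ly1 :: t)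
      rw [hqv]
      match t with
      | [] => rfl
      | lx :: s => rfl
      | ly1 :: s => exact absurd (alt_head_ne h) (by simp [cls])
      | ly2 :: s => exact absurd (alt_head_ne h) (by simp [cls])
    | ly2 =>
      rw [gl_y2, map_mul, Phi_y]
      show fy (fy q.1) = (0, ly2 :: t)
      rw [hqv]
      match t with
      | [] => rfl
      | lx :: s => rfl
      | ly1 :: s => exact absurd (alt_head_ne h) (by simp [cls])
      | ly2 :: s => exact absurd (alt_head_ne h) (by simp [cls])

lemma nf_theta (k : ℤ) (l : List L) (h : Alt l) : ((Phi (θ (k, l))) p₀).1 = (k, l) := by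
  rw [theta_pair, map_mul]
  show ((Phi (z ^ k)) ((Phi ((l.map gl).prod)) p₀)).1 = (k, l)
  rw [Phi_zpow]
  rw [S_zpow_val k, prodL_act l h]
  simp

lemma theta_inj {k k' : ℤ} {l l' : List L} (h : Alt l) (h' : Alt l')
    (he : θ (k, l) = θ (k', l')) : k = k' ∧ l = l' := by
  have := nf_theta k l h
  rw [he, nf_theta k' l' h'] at this
  exact ⟨by simpa using congrArg Prod.fst this.symm, by simpa using congrArg Prod.snd this.symm⟩

/-! ### Stage 5: the core centralizer computation -/

def prodL (l : List L) : B := (l.map gl).prod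

lemma theta_pair' (k : ℤ) (l : List L) : θ (k, l) = z ^ k * prodL l := rfl

lemma prodL_append (l₁ l₂ : List L) : prodL (l₁ ++ l₂) = prodL l₁ * prodL l₂ := by
  simp [prodL]

lemma prodL_act' (l : List L) (h : Alt l) : ((Phi (prodL l)) p₀).1 = (0, l) := prodL_act l h

lemma zy : z = y * y * y := by show x * x = y * y * y; exact xx_eq

lemma ya : y * a = x := by rw [a_eq, mul_inv_cancel_left]
lemma yyx_eq : (y * y) * x = z * a := by rw [a_eq, zy]; group
lemma xya : x * (y * a) = z := by rw [ya]; rfl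
lemma yya : (y * y) * a = y * x := by rw [mul_assoc, ya]
lemma mv_u (n : ℤ) (u w : B) : z ^ n * (u * w) = u * (z ^ n * w) := by
  rw [← mul_assoc, zpowc, mul_assoc]

lemma ua_lx (u : B) : u * a = z ^ (-1:ℤ) * (u * ((y * y) * x)) := by
  rw [mv_u, yyx_eq, zpow_neg_one, inv_mul_cancel_left]

/-- repeated two-letter pattern -/
def rep (c d : L) : ℕ → List L
  | 0 => []
  | n+1 => c :: d :: rep c d n

lemma rep_snoc (c d : L) (n : ℕ) : rep c d n ++ [c, d] = rep c d (n + 1) := by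
  induction n with
  | zero => rfl
  | succ m ih =>
    show c :: d :: (rep c d m ++ [c, d]) = c :: d :: rep c d (m + 1)
    rw [ih]

lemma period (c d : L) (hcd : c ≠ d) :
    ∀ (N : ℕ) (l : List L), l.length ≤ N → c :: d :: l = l ++ [c, d] → ∃ n, l = rep c d n := by
  intro N
  induction N with
  | zero =>
    intro l hlen _
    have : l = [] := List.eq_nil_of_length_eq_zero (Nat.le_zero.1 hlen)
    exact ⟨0, this⟩
  | succ N ih =>
    intro l hlen heq
    match l with
    | [] => exact ⟨0, rfl⟩
    | [e] =>
      exfalso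
      simp only [List.cons_append, List.nil_append, List.cons.injEq] at heq
      exact hcd heq.2.1.symm
    | e :: f :: t =>
      simp only [List.cons_append, List.cons.injEq] at heq
      obtain ⟨h1, h2, h3⟩ := heq
      subst h1; subst h2
      have hlen' : t.length ≤ N := by simp at hlen; omega
      obtain ⟨n, hn⟩ := ih t hlen' h3
      exact ⟨n + 1, by simp [rep, hn]⟩

lemma alt_rep (c d : L) (hcd : cls c ≠ cls d) (n : ℕ) :
    Alt (rep c d n) ∧ Alt (d :: rep c d n) := by
  induction n with
  | zero => simp [rep]
  | succ m ih =>
    constructor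
    · show Alt (c :: d :: rep c d m)
      exact List.isChain_cons_cons.2 ⟨hcd, ih.2⟩
    · show Alt (d :: c :: d :: rep c d m)
      exact List.isChain_cons_cons.2 ⟨Ne.symm hcd, List.isChain_cons_cons.2 ⟨hcd, ih.2⟩⟩

lemma alt_case_lx {l₁ : List L} (h : Alt (l₁ ++ [lx])) : Alt ((l₁ ++ [lx]) ++ [ly2, lx]) := by
  refine List.isChain_append.2 ⟨h, ?_, ?_⟩
  · exact List.isChain_cons_cons.2 ⟨by simp [cls], List.isChain_singleton _⟩
  · intro p hp q hq
    rw [List.getLast?_concat] at hp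
    simp only [List.head?_cons, Option.mem_def, Option.some.injEq] at hp hq
    subst hp; subst hq
    simp [cls]

lemma alt_force_lx {l'' : List L} {d : L} (h : Alt ((l'' ++ [d]) ++ [ly1])) : d = lx := by
  have h2 := List.isChain_append.1 h
  have hj := h2.2.2 d (by rw [List.getLast?_concat]; rfl) ly1 rfl
  cases d
  · rfl
  · exact absurd hj (by simp [cls])
  · exact absurd hj (by simp [cls])

lemma alt_case_ly2 {l₁ : List L} (h : Alt (l₁ ++ [ly2])) : Alt (l₁ ++ [ly1, lx]) := by
  have h2 := List.isChain_append.1 h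
  refine List.isChain_append.2 ⟨h2.1, ?_, ?_⟩
  · exact List.isChain_cons_cons.2 ⟨by simp [cls], List.isChain_singleton _⟩
  · intro p hp q hq
    simp only [List.head?_cons, Option.mem_def, Option.some.injEq] at hq
    subst hq
    have := h2.2.2 p hp ly2 rfl
    simpa [cls] using this

lemma alt_of_append_left {l₁ l₂ : List L} (h : Alt (l₁ ++ l₂)) : Alt l₁ :=
  (List.isChain_append.1 h).1

/-- the master equation between the two normal forms of `u * a = a * u`. -/
lemma nf_eq (K : ℤ) (M : List L) (hM : Alt M) {l : List L} (h : Alt l)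
    (hcomm : prodL l * a = a * prodL l)
    (hid : prodL l * a = θ (K, M)) :
    (K, M) = gy (fx (0, l)) := by
  have h1 : ((Phi (prodL l * a)) p₀).1 = (K, M) := by rw [hid]; exact nf_theta K M hM
  have h2 : ((Phi (a * prodL l)) p₀).1 = gy (fx (0, l)) := by
    rw [map_mul]
    show ((Phi a) ((Phi (prodL l)) p₀)).1 = _
    rw [Phi_a]
    show gy (fx (((Phi (prodL l)) p₀)).1) = _
    rw [prodL_act' l h]
  rw [← h1, ← h2, hcomm]

lemma core (l : List L) (h : Alt l) (hc : prodL l * a = a * prodL l) :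
    (∃ n, l = rep ly2 lx n) ∨ (∃ n, l = rep lx ly1 n) := by
  rcases List.eq_nil_or_concat l with rfl | ⟨l', c, hl⟩
  · exact Or.inl ⟨0, rfl⟩
  rw [List.concat_eq_append] at hl
  match c with
  | lx =>
    left
    have hid : prodL l * a = θ (-1, l ++ [ly2, lx]) := by
      rw [theta_pair', prodL_append]
      have e1 : prodL [ly2, lx] = (y * y) * x := by simp [prodL]
      rw [e1]
      exact ua_lx _
    have hM : Alt (l ++ [ly2, lx]) := by rw [hl] at h ⊢; exact alt_case_lx h
    have hE := nf_eq _ _ hM h hc hid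
    match l, hl, h, hE with
    | [], hl, _, _ => simp at hl
    | [lx], _, _, hE => simp at hE
    | lx :: lx :: s, _, h, _ => exact absurd (alt_head_ne h) (by simp)
    | lx :: ly1 :: s, _, _, hE => simp at hE
    | lx :: ly2 :: s, _, _, hE => simp at hE
    | ly1 :: t, _, _, hE =>
      have hE2 : (ly1 :: t) ++ [ly2, lx] = ly2 :: lx :: (ly1 :: t) := by
        simpa using congrArg Prod.snd hE
      exact period ly2 lx (by simp) _ (ly1 :: t) le_rfl hE2.symm
    | ly2 :: t, _, _, hE =>
      have hE2 : (ly2 :: t) ++ [ly2, lx] = ly2 :: lx :: (ly2 :: t) := by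
        simpa using congrArg Prod.snd hE
      exact period ly2 lx (by simp) _ (ly2 :: t) le_rfl hE2.symm
  | ly1 =>
    rcases List.eq_nil_or_concat l' with rfl | ⟨l'', d, hl'⟩
    · -- l = [ly1]
      exfalso
      have hid : prodL l * a = θ (0, [lx]) := by
        rw [hl]
        show prodL [ly1] * a = θ (0, [lx])
        have e1 : prodL [ly1] = y := by simp [prodL]
        have e2 : θ ((0:ℤ), [lx]) = x := by
          rw [theta_pair']; simp [prodL]
        rw [e1, e2, ya]
      have hE := nf_eq _ _ (by simp) h hc hid
      rw [hl] at hE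
      simp at hE
    · rw [List.concat_eq_append] at hl'
      subst hl'
      have hd : d = lx := by
        rw [hl] at h
        exact alt_force_lx h
      subst hd
      right
      have hl2 : l = l'' ++ [lx, ly1] := by rw [hl]; simp
      have hid : prodL l * a = θ (1, l'') := by
        rw [hl2, theta_pair', prodL_append]
        have e1 : prodL [lx, ly1] = x * y := by simp [prodL]
        rw [e1, zpow_one, mul_assoc (prodL l''), mul_assoc x, xya, ← zc]
      have hAltl'' : Alt l'' := by
        rw [hl2] at h
        exact alt_of_append_left h
      have hE := nf_eq _ _ hAltl'' h hc hid
      match l, hl2, h, hE with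
      | [], hl2, _, _ => simp at hl2
      | [lx], _, _, hE => simp at hE
      | lx :: lx :: s, _, h, _ => exact absurd (alt_head_ne h) (by simp)
      | lx :: ly1 :: s, hl2, _, hE =>
        have hss : l'' = s := by simpa using congrArg Prod.snd hE
        rw [hss] at hl2
        obtain ⟨n, hn⟩ := period lx ly1 (by simp) _ s le_rfl hl2
        exact ⟨n + 1, by rw [show rep lx ly1 (n+1) = lx :: ly1 :: rep lx ly1 n from rfl, ← hn]⟩
      | lx :: ly2 :: s, hl2, _, hE =>
        exfalso
        have hss : l'' = ly1 :: s := by simpa using congrArg Prod.snd hE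
        rw [hss] at hl2
        simp at hl2
      | ly1 :: t, _, _, hE => simp at hE
      | ly2 :: t, _, _, hE => simp at hE
  | ly2 =>
    exfalso
    have hid : prodL l * a = θ (0, l' ++ [ly1, lx]) := by
      rw [hl, theta_pair', prodL_append, prodL_append]
      have e1 : prodL [ly2] = y * y := by simp [prodL]
      have e2 : prodL [ly1, lx] = y * x := by simp [prodL]
      rw [e1, e2, zpow_zero, one_mul, mul_assoc, yya]
    have hM : Alt (l' ++ [ly1, lx]) := by
      rw [hl] at h
      exact alt_case_ly2 h
    have hE := nf_eq _ _ hM h hc hid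
    match l, hl, h, hE with
    | [], hl, _, _ => simp at hl
    | [lx], hl, _, _ =>
      rcases List.eq_nil_or_concat l' with rfl | ⟨l2, e, hl3⟩
      · simp at hl
      · rw [List.concat_eq_append] at hl3; rw [hl3] at hl
        rcases l2 with _ | ⟨g, l3⟩ <;> simp at hl
    | lx :: lx :: s, _, h, _ => exact absurd (alt_head_ne h) (by simp)
    | lx :: ly1 :: s, _, _, hE => simp at hE
    | lx :: ly2 :: s, _, _, hE => simp at hE
    | ly1 :: t, _, _, hE => simp at hE
    | ly2 :: t, _, _, hE => simp at hE

/-! ### Stage 6: assembly -/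

lemma xy_eq : x * y = z * a⁻¹ := by
  rw [a_eq, show z = x * x from rfl]; group

lemma prodL_pRep (n : ℕ) : prodL (rep ly2 lx n) = (z * a) ^ n := by
  induction n with
  | zero => simp [prodL, rep]
  | succ m ih =>
    have e1 : prodL (rep ly2 lx (m+1)) = ((y * y) * x) * prodL (rep ly2 lx m) := by
      show prodL (ly2 :: lx :: rep ly2 lx m) = _
      simp [prodL, mul_assoc]
    rw [e1, ih, yyx_eq, ← pow_succ']

lemma prodL_qRep (n : ℕ) : prodL (rep lx ly1 n) = (z * a⁻¹) ^ n := by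
  induction n with
  | zero => simp [prodL, rep]
  | succ m ih =>
    have e1 : prodL (rep lx ly1 (m+1)) = (x * y) * prodL (rep lx ly1 m) := by
      show prodL (lx :: ly1 :: rep lx ly1 m) = _
      simp [prodL, mul_assoc]
    rw [e1, ih, xy_eq, ← pow_succ']

lemma theta_rep_p (k : ℤ) (n : ℕ) : θ (k, rep ly2 lx n) = z ^ (k + n) * a ^ (n : ℤ) := by
  rw [theta_pair', prodL_pRep, (z_central a).mul_pow, ← mul_assoc, ← zpow_natCast z,
    ← zpow_add, ← zpow_natCast a]

lemma theta_rep_q (k : ℤ) (n : ℕ) : θ (k, rep lx ly1 n) = z ^ (k + n) * a ^ (-(n : ℤ)) := by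
  rw [theta_pair', prodL_qRep, (z_central a⁻¹).mul_pow, ← mul_assoc, ← zpow_natCast z,
    ← zpow_add, inv_pow, ← zpow_natCast a, ← zpow_neg]

lemma comm_char (w : B) (hcomm : w * a = a * w) : ∃ p q : ℤ, w = z ^ p * a ^ q := by
  have hw : θ ((Phi w p₀).1) = w := theta_nf w
  rcases hP : Phi w p₀ with ⟨⟨k, l⟩, hAlt⟩
  rw [hP] at hw
  have hw2 : w = z ^ k * prodL l := by rw [← hw, theta_pair']
  have hu : prodL l * a = a * prodL l := by
    have h1 : z ^ k * (prodL l * a) = z ^ k * (a * prodL l) := by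
      calc z ^ k * (prodL l * a) = (z ^ k * prodL l) * a := by rw [mul_assoc]
        _ = w * a := by rw [← hw2]
        _ = a * w := hcomm
        _ = a * (z ^ k * prodL l) := by rw [← hw2]
        _ = z ^ k * (a * prodL l) := (mv_u k a (prodL l)).symm
    exact mul_left_cancel h1
  rcases core l hAlt hu with ⟨n, rfl⟩ | ⟨n, rfl⟩
  · exact ⟨k + n, n, by rw [← hw]; exact theta_rep_p k n⟩
  · exact ⟨k + n, -n, by rw [← hw]; exact theta_rep_q k n⟩

lemma theta_one : θ ((0:ℤ), ([] : List L)) = 1 := by simp [θ, prodL]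

lemma free_za {p q : ℤ} (h1 : z ^ p * a ^ q = 1) : p = 0 ∧ q = 0 := by
  rcases le_or_gt 0 q with hq | hq
  · lift q to ℕ using hq
    have hth : θ (p - q, rep ly2 lx q) = z ^ p * a ^ (q:ℤ) := by
      rw [theta_rep_p (p - q) q, sub_add_cancel]
    have hinj := theta_inj (alt_rep ly2 lx (by simp [cls]) q).1 alt_nil
      (by rw [hth, h1, theta_one])
    have hq0 : q = 0 := by
      cases q with
      | zero => rfl
      | succ m => exact absurd hinj.2 (by simp [rep])
    subst hq0
    refine ⟨by omega, rfl⟩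
  · exfalso
    set m := (-q).toNat with hm
    have hmq : (m : ℤ) = -q := Int.toNat_of_nonneg (by omega)
    have hth : θ (p - m, rep lx ly1 m) = z ^ p * a ^ q := by
      rw [theta_rep_q (p - m) m, sub_add_cancel, hmq, neg_neg]
    have hinj := theta_inj (alt_rep lx ly1 (by simp [cls]) m).1 alt_nil
      (by rw [hth, h1, theta_one])
    have : m = 0 := by
      cases hm2 : m with
      | zero => rfl
      | succ k => rw [hm2] at hinj; exact absurd hinj.2 (by simp [rep])
    omega

lemma gen_singleton : {β : B | ∃ i : Fin (3-1), (i:ℕ) < 2 - 1 ∧ β = braidGen i} = {a} := by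
  ext β
  simp only [Set.mem_setOf_eq, Set.mem_singleton_iff]
  constructor
  · rintro ⟨i, hi, rfl⟩
    have : i = ⟨0, by norm_num⟩ := by
      apply Fin.ext; simpa using by omega
    rw [this]; rfl
  · rintro rfl
    exact ⟨⟨0, by norm_num⟩, by norm_num, rfl⟩

lemma braidSub_eq : braidSub 3 2 = Subgroup.closure {a} := by
  unfold braidSub
  rw [gen_singleton]

lemma mem_cent_iff (β : B) :
    β ∈ Subgroup.centralizer (braidSub 3 2 : Set B) ↔ a * β = β * a := by
  rw [Subgroup.mem_centralizer_iff]
  constructor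
  · intro H
    refine H a ?_
    rw [braidSub_eq]
    exact Subgroup.subset_closure rfl
  · intro H g hg
    rw [braidSub_eq] at hg
    have hsub : ({a} : Set B) ⊆ (Subgroup.centralizer {β} : Set B) := by
      intro u hu
      rw [Set.mem_singleton_iff] at hu
      subst hu
      rw [SetLike.mem_coe, Subgroup.mem_centralizer_iff]
      intro v hv
      rw [Set.mem_singleton_iff] at hv
      subst hv
      exact H.symm
    have := (Subgroup.closure_le (Subgroup.centralizer {β})).2 hsub hg
    rw [Subgroup.mem_centralizer_iff] at this
    exact (this β rfl).symm

lemma cent_char (β : B) :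
    β ∈ Subgroup.centralizer (braidSub 3 2 : Set B) ↔ ∃ p q : ℤ, β = z ^ p * a ^ q := by
  rw [mem_cent_iff]
  constructor
  · intro H
    exact comm_char β H.symm
  · rintro ⟨p, q, rfl⟩
    exact (((z_central a).symm.zpow_right p).mul_right
      (Commute.zpow_right (Commute.refl a) q)).eq

lemma c_eq : b * a ^ 2 * b = z * a ^ (-2:ℤ) := by
  have h1 : b * a ^ 2 * b = a⁻¹ * z * a⁻¹ := by
    show b * a ^ 2 * b = a⁻¹ * ((a*b*a)*(a*b*a)) * a⁻¹
    rw [pow_two]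
    group
  have h2 : a⁻¹ * z = z * a⁻¹ := ((z_central a⁻¹).eq).symm
  rw [h1, h2, mul_assoc]
  congr 1

lemma shift_form (p q : ℤ) : (b * a ^ 2 * b) ^ p * a ^ q = z ^ p * a ^ (q - 2 * p) := by
  rw [c_eq, ((z_central (a ^ (-2:ℤ))).mul_zpow p), mul_assoc, ← zpow_mul, ← zpow_add]
  congr 1
  ring

lemma main_iff (β : BraidGroup 3) :
    β ∈ Subgroup.centralizer (braidSub 3 2 : Set (BraidGroup 3)) ↔
      ∃ p q : ℤ, β = (sigma' 3 2 * sigma' 3 1 ^ 2 * sigma' 3 2) ^ p * sigma' 3 1 ^ q := by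
  have hσ1 : sigma' 3 1 = a := rfl
  have hσ2 : sigma' 3 2 = b := rfl
  rw [hσ1, hσ2, cent_char]
  constructor
  · rintro ⟨p, q, rfl⟩
    exact ⟨p, q + 2 * p, by rw [shift_form]; congr 1; ring_nf⟩
  · rintro ⟨p, q, rfl⟩
    exact ⟨p, q - 2 * p, (shift_form p q)⟩

def J : Multiplicative (ℤ × ℤ) →* B :=
  MonoidHom.mk' (fun m => z ^ (Multiplicative.toAdd m).1 * a ^ (Multiplicative.toAdd m).2)
    (by
      intro m n
      show z ^ ((Multiplicative.toAdd m).1 + (Multiplicative.toAdd n).1) *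
          a ^ ((Multiplicative.toAdd m).2 + (Multiplicative.toAdd n).2) = _
      rw [zpow_add, zpow_add]
      exact ((z_central (a ^ (Multiplicative.toAdd m).2)).zpow_left
        (Multiplicative.toAdd n).1).mul_mul_mul_comm _ _)

lemma J_apply (p q : ℤ) : J (Multiplicative.ofAdd (p, q)) = z ^ p * a ^ q := rfl

lemma J_mem (m : Multiplicative (ℤ × ℤ)) :
    J m ∈ Subgroup.centralizer (braidSub 3 2 : Set B) :=
  (cent_char _).2 ⟨(Multiplicative.toAdd m).1, (Multiplicative.toAdd m).2, rfl⟩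

lemma J_inj : Function.Injective J := by
  rw [injective_iff_map_eq_one]
  intro m hm
  have h := free_za (show z ^ (Multiplicative.toAdd m).1 * a ^ (Multiplicative.toAdd m).2 = 1
    from hm)
  have : Multiplicative.toAdd m = (0, 0) := Prod.ext h.1 h.2
  calc m = Multiplicative.ofAdd (Multiplicative.toAdd m) := rfl
    _ = Multiplicative.ofAdd (0, 0) := by rw [this]
    _ = 1 := rfl

noncomputable def E :
    (Subgroup.centralizer (braidSub 3 2 : Set B)) ≃* Multiplicative (ℤ × ℤ) := by
  refine (MulEquiv.ofBijective (J.codRestrict (Subgroup.centralizer _) J_mem) ⟨?_, ?_⟩).symm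
  · intro m n h
    exact J_inj (congrArg Subtype.val h)
  · rintro ⟨β, hβ⟩
    obtain ⟨p, q, hpq⟩ := (cent_char β).1 hβ
    exact ⟨Multiplicative.ofAdd (p, q), Subtype.ext (by show z ^ p * a ^ q = β; exact hpq.symm)⟩

end Braid11

/-- The centralizer of `B₂` in `B₃` is `{(σ₂σ₁²σ₂)^p σ₁^q : p, q ∈ ℤ}`, and it is
isomorphic to `ℤ × ℤ`. -/
theorem stmt_11 :
    letI σ₁ : BraidGroup 3 := sigma' 3 1
    letI σ₂ : BraidGroup 3 := sigma' 3 2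
    (∀ β : BraidGroup 3,
      β ∈ Subgroup.centralizer (braidSub 3 2 : Set (BraidGroup 3)) ↔
        ∃ p q : ℤ, β = (σ₂ * σ₁ ^ 2 * σ₂) ^ p * σ₁ ^ q) ∧
    Nonempty ((Subgroup.centralizer (braidSub 3 2 : Set (BraidGroup 3))) ≃*
      Multiplicative (ℤ × ℤ)) := by
  exact ⟨Braid11.main_iff, ⟨Braid11.E⟩⟩
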